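/- With the operators E_{ab} (a,b ∈ {1,...,n+m}) on A defined as in the oscillator representation of gl(n|m) (E_{ij} = x_i∂_{x_j} − y_j∂_{y_i}, E_{i,n+r} = x_i∂_{θ_r} − ϑ_r∂_{y_i}, E_{n+r,i} = θ_r∂_{x_i} + y_i∂_{ϑ_r}, E_{n+r,n+s} = θ_r∂_{θ_s} − ϑ_s∂_{ϑ_r}), each E_{ab} commutes with the super-Laplacian Δ = Σ_{i=1}^n ∂_{x_i}∂_{y_i} + Σ_{r=1}^m ∂_{θ_r}∂_{ϑ_r} as operators on A. -/

import Mathlib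

open TensorProduct MvPolynomial

noncomputable section

variable (n m : ℕ)

/-- bosonic polynomial part -/
abbrev PolyA (n : ℕ) := MvPolynomial (Fin n ⊕ Fin n) ℂ
/-- fermionic exterior part -/
abbrev ExtA (m : ℕ) := ExteriorAlgebra ℂ ((Fin m ⊕ Fin m) → ℂ)
/-- full supersymmetric algebra -/
abbrev SAlg (n m : ℕ) := PolyA n ⊗[ℂ] ExtA m

-- generators
def xv (i : Fin n) : PolyA n := X (Sum.inl i)
def yv (i : Fin n) : PolyA n := X (Sum.inr i)
def θv (r : Fin m) : ExtA m := ExteriorAlgebra.ι ℂ (Pi.single (Sum.inl r) 1)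
def ϑv (r : Fin m) : ExtA m := ExteriorAlgebra.ι ℂ (Pi.single (Sum.inr r) 1)

-- odd superderivations on the exterior part
def dθ (r : Fin m) : Module.End ℂ (ExtA m) :=
  CliffordAlgebra.contractLeft (Q := (0 : QuadraticForm ℂ ((Fin m ⊕ Fin m) → ℂ)))
    (LinearMap.proj (Sum.inl r))
def dϑ (r : Fin m) : Module.End ℂ (ExtA m) :=
  CliffordAlgebra.contractLeft (Q := (0 : QuadraticForm ℂ ((Fin m ⊕ Fin m) → ℂ)))
    (LinearMap.proj (Sum.inr r))

-- operators on the full algebra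
def pdx (i : Fin n) : Module.End ℂ (SAlg n m) :=
  TensorProduct.map ((pderiv (Sum.inl i) : Derivation ℂ (PolyA n) (PolyA n)) : PolyA n →ₗ[ℂ] PolyA n) LinearMap.id
def pdy (i : Fin n) : Module.End ℂ (SAlg n m) :=
  TensorProduct.map ((pderiv (Sum.inr i) : Derivation ℂ (PolyA n) (PolyA n)) : PolyA n →ₗ[ℂ] PolyA n) LinearMap.id
def pdθ (r : Fin m) : Module.End ℂ (SAlg n m) :=
  TensorProduct.map LinearMap.id (dθ m r)
def pdϑ (r : Fin m) : Module.End ℂ (SAlg n m) :=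
  TensorProduct.map LinearMap.id (dϑ m r)

-- multiplication operators
def mx (i : Fin n) : Module.End ℂ (SAlg n m) := LinearMap.mulLeft ℂ (xv n i ⊗ₜ[ℂ] 1)
def mθ (r : Fin m) : Module.End ℂ (SAlg n m) := LinearMap.mulLeft ℂ ((1 : PolyA n) ⊗ₜ[ℂ] θv m r)

def my (i : Fin n) : Module.End ℂ (SAlg n m) := LinearMap.mulLeft ℂ (yv n i ⊗ₜ[ℂ] 1)
def mϑ (r : Fin m) : Module.End ℂ (SAlg n m) := LinearMap.mulLeft ℂ ((1 : PolyA n) ⊗ₜ[ℂ] ϑv m r)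

/-- the element η = Σ_i x_i y_i + Σ_r θ_r ϑ_r of the superalgebra -/
def ηelt : SAlg n m :=
  (∑ i : Fin n, (xv n i * yv n i) ⊗ₜ[ℂ] (1 : ExtA m))
    + ∑ r : Fin m, (1 : PolyA n) ⊗ₜ[ℂ] (θv m r * ϑv m r)

/-- the super-Laplacian Δ = Σ_i ∂_{x_i}∂_{y_i} + Σ_r ∂_{θ_r}∂_{ϑ_r} -/
def ΔS : Module.End ℂ (SAlg n m) :=
  (∑ i : Fin n, pdx n m i ∘ₗ pdy n m i) + ∑ r : Fin m, pdθ n m r ∘ₗ pdϑ n m r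
/-- multiplication by η -/
def ηop : Module.End ℂ (SAlg n m) := LinearMap.mulLeft ℂ (ηelt n m)

/-- E_{ij} = x_i∂_{x_j} − y_j∂_{y_i} -/
def Eij (i j : Fin n) : Module.End ℂ (SAlg n m) := mx n m i ∘ₗ pdx n m j - my n m j ∘ₗ pdy n m i
/-- E_{i,n+r} = x_i∂_{θ_r} − ϑ_r∂_{y_i} -/
def Einr (i : Fin n) (r : Fin m) : Module.End ℂ (SAlg n m) :=
  mx n m i ∘ₗ pdθ n m r - mϑ n m r ∘ₗ pdy n m i
/-- E_{n+r,i} = θ_r∂_{x_i} + y_i∂_{ϑ_r} -/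
def Enri (r : Fin m) (i : Fin n) : Module.End ℂ (SAlg n m) :=
  mθ n m r ∘ₗ pdx n m i + my n m i ∘ₗ pdϑ n m r
/-- E_{n+r,n+s} = θ_r∂_{θ_s} − ϑ_s∂_{ϑ_r} -/
def Enrs (r s : Fin m) : Module.End ℂ (SAlg n m) :=
  mθ n m r ∘ₗ pdθ n m s - mϑ n m s ∘ₗ pdϑ n m r

section keys
variable {R : Type*} [Ring R]

lemma hp_of_comm {d q p : R} (hdp : d * p = p * d) (hqp : q * p = p * q) :
    d * (q * p) = p * (d * q) := by rw [hqp, ← mul_assoc, hdp, mul_assoc]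

lemma hp_of_anti {d q p : R} (hdp : d * p = -(p * d)) (hqp : q * p = -(p * q)) :
    d * (q * p) = p * (d * q) := by
  rw [hqp, mul_neg, ← mul_assoc, hdp, neg_mul, neg_neg, mul_assoc]

lemma key1 {d q a p c : R} (h : d * a = a * d + c)
    (hqa : q * a = a * q) (hp : d * (q * p) = p * (d * q)) :
    (d * q) * (a * p) = (a * p) * (d * q) + c * (q * p) := by
  calc (d * q) * (a * p) = d * ((q * a) * p) := by rw [mul_assoc, ← mul_assoc q a p]
    _ = (d * a) * (q * p) := by rw [hqa, mul_assoc a q p, ← mul_assoc]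
    _ = a * (d * (q * p)) + c * (q * p) := by rw [h, add_mul, mul_assoc]
    _ = (a * p) * (d * q) + c * (q * p) := by rw [hp, ← mul_assoc]

lemma key0 {d q a p : R} (hda : d * a = a * d)
    (hqa : q * a = a * q) (hp : d * (q * p) = p * (d * q)) :
    (d * q) * (a * p) = (a * p) * (d * q) := by
  have := key1 (c := 0) (by rw [hda, add_zero]) hqa hp
  simpa using this

lemma key2 {d q a p c : R} (hda : d * a = a * d) (h : q * a = a * q + c)
    (hc : d * c = c * d) (hp : d * (q * p) = p * (d * q)) :
    (d * q) * (a * p) = (a * p) * (d * q) + c * (d * p) := by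
  calc (d * q) * (a * p) = d * ((q * a) * p) := by rw [mul_assoc, ← mul_assoc q a p]
    _ = d * ((a * q) * p) + d * (c * p) := by rw [h, add_mul, mul_add]
    _ = (d * a) * (q * p) + (d * c) * p := by
        rw [mul_assoc a q p, ← mul_assoc, ← mul_assoc d c p]
    _ = a * (d * (q * p)) + c * (d * p) := by rw [hda, hc, mul_assoc, mul_assoc]
    _ = (a * p) * (d * q) + c * (d * p) := by rw [hp, ← mul_assoc]

lemma key3 {d q a p c : R} (hda : d * a = c - a * d) (hqa : q * a = -(a * q))
    (hp : d * (q * p) = p * (d * q)) :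
    (d * q) * (a * p) = (a * p) * (d * q) - c * (q * p) := by
  calc (d * q) * (a * p) = d * ((q * a) * p) := by rw [mul_assoc, ← mul_assoc q a p]
    _ = -((d * a) * (q * p)) := by rw [hqa, neg_mul, mul_neg, mul_assoc a q p, ← mul_assoc]
    _ = a * (d * (q * p)) - c * (q * p) := by rw [hda, sub_mul, neg_sub, mul_assoc]
    _ = (a * p) * (d * q) - c * (q * p) := by rw [hp, ← mul_assoc]

lemma key4 {d q a p c : R} (hda : d * a = -(a * d)) (hqa : q * a = c - a * q)
    (hc : d * c = c * d) (hp : d * (q * p) = p * (d * q)) :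
    (d * q) * (a * p) = (a * p) * (d * q) + c * (d * p) := by
  calc (d * q) * (a * p) = d * ((q * a) * p) := by rw [mul_assoc, ← mul_assoc q a p]
    _ = (d * c) * p - (d * a) * (q * p) := by
        rw [hqa, sub_mul, mul_sub, ← mul_assoc, mul_assoc a q p, ← mul_assoc]
    _ = c * (d * p) + a * (d * (q * p)) := by
        rw [hc, hda, neg_mul, sub_neg_eq_add, mul_assoc, mul_assoc]
    _ = (a * p) * (d * q) + c * (d * p) := by rw [hp, ← mul_assoc a p, add_comm]

lemma central_ite (P : Prop) [Decidable P] (z : R) :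
    z * (if P then (1 : R) else 0) = (if P then (1 : R) else 0) * z := by
  split_ifs <;> simp

lemma sum_shift {ι : Type*} (s : Finset ι) (f F : ι → R) (X : R)
    (h : ∀ k ∈ s, f k * X = X * f k + F k) :
    (∑ k ∈ s, f k) * X = X * (∑ k ∈ s, f k) + ∑ k ∈ s, F k := by
  rw [Finset.sum_mul, Finset.mul_sum, ← Finset.sum_add_distrib]
  exact Finset.sum_congr rfl h
end keys

def gD (u : Fin n ⊕ Fin n) : Module.End ℂ (SAlg n m) :=
  TensorProduct.map ((pderiv u : Derivation ℂ (PolyA n) (PolyA n)) : PolyA n →ₗ[ℂ] PolyA n) LinearMap.id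
def gF (w : Fin m ⊕ Fin m) : Module.End ℂ (SAlg n m) :=
  TensorProduct.map LinearMap.id
    (CliffordAlgebra.contractLeft (Q := (0 : QuadraticForm ℂ ((Fin m ⊕ Fin m) → ℂ)))
      (LinearMap.proj w))
def gP (u : Fin n ⊕ Fin n) : Module.End ℂ (SAlg n m) :=
  LinearMap.mulLeft ℂ ((X u : PolyA n) ⊗ₜ[ℂ] (1 : ExtA m))
def gZ (w : Fin m ⊕ Fin m) : Module.End ℂ (SAlg n m) :=
  LinearMap.mulLeft ℂ ((1 : PolyA n) ⊗ₜ[ℂ] (ExteriorAlgebra.ι ℂ (Pi.single w 1)))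

-- relation A
lemma relA (u v : Fin n ⊕ Fin n) :
    gD n m u * gP n m v = gP n m v * gD n m u + if u = v then 1 else 0 := by
  apply TensorProduct.ext'
  intro p e
  by_cases h : u = v
  · subst h
    simp [gD, gP, Module.End.mul_apply, LinearMap.mulLeft_apply,
      Algebra.TensorProduct.tmul_mul_tmul, pderiv_mul, pderiv_X_self, add_tmul,
      LinearMap.add_apply, Module.End.one_apply, add_comm]
  · simp [gD, gP, h, Module.End.mul_apply, LinearMap.mulLeft_apply,
      Algebra.TensorProduct.tmul_mul_tmul, pderiv_mul, pderiv_X_of_ne (Ne.symm h)]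

lemma relB (u : Fin n ⊕ Fin n) (w : Fin m ⊕ Fin m) :
    gD n m u * gZ n m w = gZ n m w * gD n m u := by
  apply TensorProduct.ext'
  intro p e
  simp [gD, gZ, Module.End.mul_apply, LinearMap.mulLeft_apply,
    Algebra.TensorProduct.tmul_mul_tmul]

lemma relC (u v : Fin n ⊕ Fin n) :
    gD n m u * gD n m v = gD n m v * gD n m u := by
  have hp : ∀ p : PolyA n, pderiv u (pderiv v p) = pderiv v (pderiv u p) := by
    intro p
    induction p using MvPolynomial.induction_on with
    | C a => simp
    | add p q hp hq => simp [hp, hq]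
    | mul_X p s ih =>
      have hX : ∀ t t' : Fin n ⊕ Fin n, pderiv t (pderiv t' (X s : PolyA n)) = 0 := by
        intro t t'
        rcases eq_or_ne s t' with h | h
        · subst h; simp
        · simp [pderiv_X_of_ne h]
      simp only [pderiv_mul, map_add, ih, hX]
      ring
  apply TensorProduct.ext'
  intro p e
  simp [gD, Module.End.mul_apply, hp]

lemma relD (u : Fin n ⊕ Fin n) (w : Fin m ⊕ Fin m) :
    gD n m u * gF n m w = gF n m w * gD n m u := by
  apply TensorProduct.ext'
  intro p e
  simp [gD, gF, Module.End.mul_apply]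

lemma relE (w : Fin m ⊕ Fin m) (v : Fin n ⊕ Fin n) :
    gF n m w * gP n m v = gP n m v * gF n m w := by
  apply TensorProduct.ext'
  intro p e
  simp [gF, gP, Module.End.mul_apply, LinearMap.mulLeft_apply,
    Algebra.TensorProduct.tmul_mul_tmul]

lemma relF (w w' : Fin m ⊕ Fin m) :
    gF n m w * gZ n m w' = (if w = w' then 1 else 0) - gZ n m w' * gF n m w := by
  apply TensorProduct.ext'
  intro p e
  by_cases h : w = w'
  · subst h
    simp [gF, gZ, Module.End.mul_apply, LinearMap.mulLeft_apply,
      Algebra.TensorProduct.tmul_mul_tmul, CliffordAlgebra.contractLeft_ι_mul,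
      tmul_sub, LinearMap.sub_apply, Module.End.one_apply, sub_eq_iff_eq_add]
  · simp [gF, gZ, h, Module.End.mul_apply, LinearMap.mulLeft_apply,
      Algebra.TensorProduct.tmul_mul_tmul, CliffordAlgebra.contractLeft_ι_mul,
      tmul_sub, tmul_neg, neg_tmul, Pi.single_apply, Ne.symm h]

lemma relG (w w' : Fin m ⊕ Fin m) :
    gF n m w * gF n m w' = -(gF n m w' * gF n m w) := by
  apply TensorProduct.ext'
  intro p e
  rw [LinearMap.neg_apply]
  simp only [gF, Module.End.mul_apply, TensorProduct.map_tmul, LinearMap.id_coe, id_eq]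
  rw [CliffordAlgebra.contractLeft_comm, tmul_neg]

lemma pdx_eq (i : Fin n) : pdx n m i = gD n m (Sum.inl i) := rfl
lemma ΔS_eq : ΔS n m =
    (∑ k : Fin n, gD n m (Sum.inl k) * gD n m (Sum.inr k))
      + ∑ t : Fin m, gF n m (Sum.inl t) * gF n m (Sum.inr t) := rfl

lemma relA0 (u v : Fin n ⊕ Fin n) (h : u ≠ v) :
    gD n m u * gP n m v = gP n m v * gD n m u := by
  rw [relA n m u v, if_neg h]
  exact add_zero _

lemma relF0 (w w' : Fin m ⊕ Fin m) (h : w ≠ w') :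
    gF n m w * gZ n m w' = -(gZ n m w' * gF n m w) := by
  rw [relF n m w w', if_neg h]
  abel

lemma delta_mul (X : Module.End ℂ (SAlg n m))
    (FT : Fin n → Module.End ℂ (SAlg n m)) (FS : Fin m → Module.End ℂ (SAlg n m))
    (hT : ∀ k, (gD n m (Sum.inl k) * gD n m (Sum.inr k)) * X
        = X * (gD n m (Sum.inl k) * gD n m (Sum.inr k)) + FT k)
    (hS : ∀ t, (gF n m (Sum.inl t) * gF n m (Sum.inr t)) * X
        = X * (gF n m (Sum.inl t) * gF n m (Sum.inr t)) + FS t) :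
    ΔS n m * X = X * ΔS n m + ((∑ k : Fin n, FT k) + ∑ t : Fin m, FS t) := by
  rw [ΔS_eq, add_mul, mul_add,
    sum_shift (R := Module.End ℂ (SAlg n m)) Finset.univ _ FT X (fun k _ => hT k),
    sum_shift (R := Module.End ℂ (SAlg n m)) Finset.univ _ FS X (fun t _ => hS t)]
  abel

lemma part1 (i : Fin n) (j : Fin n) :
    Eij n m i j ∘ₗ ΔS n m = ΔS n m ∘ₗ Eij n m i j := by
  have hEij : Eij n m i j
      = gP n m (Sum.inl i) * gD n m (Sum.inl j) - gP n m (Sum.inr j) * gD n m (Sum.inr i) := rfl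
  have hX : ΔS n m * (gP n m (Sum.inl i) * gD n m (Sum.inl j))
      = (gP n m (Sum.inl i) * gD n m (Sum.inl j)) * ΔS n m
        + gD n m (Sum.inr i) * gD n m (Sum.inl j) := by
    have h := delta_mul n m (gP n m (Sum.inl i) * gD n m (Sum.inl j))
      (fun k => (if (Sum.inl k : Fin n ⊕ Fin n) = Sum.inl i then (1 : Module.End ℂ (SAlg n m)) else 0)
        * (gD n m (Sum.inr k) * gD n m (Sum.inl j)))
      (fun _ => 0)
      (fun k => by
        beta_reduce
        exact key1 (R := Module.End ℂ (SAlg n m)) (relA n m _ _)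
          (relA0 n m (Sum.inr k) (Sum.inl i) (by simp))
          (hp_of_comm (relC n m _ _) (relC n m _ _)))
      (fun t => by
        beta_reduce
        exact (key0 (R := Module.End ℂ (SAlg n m)) (relE n m _ _) (relE n m _ _)
          (hp_of_comm ((relD n m _ _).symm) ((relD n m _ _).symm))).trans (add_zero _).symm)
    simpa [Finset.sum_neg_distrib] using h
  have hY : ΔS n m * (gP n m (Sum.inr j) * gD n m (Sum.inr i))
      = (gP n m (Sum.inr j) * gD n m (Sum.inr i)) * ΔS n m
        + gD n m (Sum.inl j) * gD n m (Sum.inr i) := by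
    have h := delta_mul n m (gP n m (Sum.inr j) * gD n m (Sum.inr i))
      (fun k => (if (Sum.inr k : Fin n ⊕ Fin n) = Sum.inr j then (1 : Module.End ℂ (SAlg n m)) else 0)
        * (gD n m (Sum.inl k) * gD n m (Sum.inr i)))
      (fun _ => 0)
      (fun k => by
        beta_reduce
        exact key2 (R := Module.End ℂ (SAlg n m))
          (relA0 n m (Sum.inl k) (Sum.inr j) (by simp)) (relA n m _ _)
          (central_ite (R := Module.End ℂ (SAlg n m)) _ _) (hp_of_comm (relC n m _ _) (relC n m _ _)))
      (fun t => by
        beta_reduce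
        exact (key0 (R := Module.End ℂ (SAlg n m)) (relE n m _ _) (relE n m _ _)
          (hp_of_comm ((relD n m _ _).symm) ((relD n m _ _).symm))).trans (add_zero _).symm)
    simpa [Finset.sum_neg_distrib] using h
  have e1 : ΔS n m * (gP n m (Sum.inl i) * gD n m (Sum.inl j) - gP n m (Sum.inr j) * gD n m (Sum.inr i))
      = ΔS n m * (gP n m (Sum.inl i) * gD n m (Sum.inl j)) - ΔS n m * (gP n m (Sum.inr j) * gD n m (Sum.inr i)) := mul_sub (α := Module.End ℂ (SAlg n m)) _ _ _
  have e2 : (gP n m (Sum.inl i) * gD n m (Sum.inl j) - gP n m (Sum.inr j) * gD n m (Sum.inr i)) * ΔS n m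
      = (gP n m (Sum.inl i) * gD n m (Sum.inl j)) * ΔS n m - (gP n m (Sum.inr j) * gD n m (Sum.inr i)) * ΔS n m := sub_mul (α := Module.End ℂ (SAlg n m)) _ _ _
  rw [← Module.End.mul_eq_comp, ← Module.End.mul_eq_comp, hEij, e1, e2, hX, hY,
    relC n m (Sum.inr i) (Sum.inl j)]
  abel

lemma part2 (i : Fin n) (r : Fin m) :
    Einr n m i r ∘ₗ ΔS n m = ΔS n m ∘ₗ Einr n m i r := by
  have hE : Einr n m i r
      = gP n m (Sum.inl i) * gF n m (Sum.inl r) - gZ n m (Sum.inr r) * gD n m (Sum.inr i) := rfl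
  have hX : ΔS n m * (gP n m (Sum.inl i) * gF n m (Sum.inl r))
      = (gP n m (Sum.inl i) * gF n m (Sum.inl r)) * ΔS n m
        + gD n m (Sum.inr i) * gF n m (Sum.inl r) := by
    have h := delta_mul n m (gP n m (Sum.inl i) * gF n m (Sum.inl r))
      (fun k => (if (Sum.inl k : Fin n ⊕ Fin n) = Sum.inl i then (1 : Module.End ℂ (SAlg n m)) else 0)
        * (gD n m (Sum.inr k) * gF n m (Sum.inl r)))
      (fun _ => 0)
      (fun k => by
        beta_reduce
        exact key1 (R := Module.End ℂ (SAlg n m)) (relA n m _ _)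
          (relA0 n m (Sum.inr k) (Sum.inl i) (by simp))
          (hp_of_comm (relD n m _ _) (relD n m _ _)))
      (fun t => by
        beta_reduce
        exact (key0 (R := Module.End ℂ (SAlg n m)) (relE n m _ _) (relE n m _ _)
          (hp_of_anti (relG n m _ _) (relG n m _ _))).trans (add_zero _).symm)
    simpa [Finset.sum_neg_distrib] using h
  have hY : ΔS n m * (gZ n m (Sum.inr r) * gD n m (Sum.inr i))
      = (gZ n m (Sum.inr r) * gD n m (Sum.inr i)) * ΔS n m
        + gF n m (Sum.inl r) * gD n m (Sum.inr i) := by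
    have h := delta_mul n m (gZ n m (Sum.inr r) * gD n m (Sum.inr i))
      (fun _ => 0)
      (fun t => (if (Sum.inr t : Fin m ⊕ Fin m) = Sum.inr r then (1 : Module.End ℂ (SAlg n m)) else 0)
        * (gF n m (Sum.inl t) * gD n m (Sum.inr i)))
      (fun k => by
        beta_reduce
        exact (key0 (R := Module.End ℂ (SAlg n m)) (relB n m _ _) (relB n m _ _)
          (hp_of_comm (relC n m _ _) (relC n m _ _))).trans (add_zero _).symm)
      (fun t => by
        beta_reduce
        exact key4 (R := Module.End ℂ (SAlg n m))
          (relF0 n m (Sum.inl t) (Sum.inr r) (by simp)) (relF n m _ _)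
          (central_ite (R := Module.End ℂ (SAlg n m)) _ _)
          (hp_of_comm ((relD n m _ _).symm) ((relD n m _ _).symm)))
    simpa [Finset.sum_neg_distrib] using h
  have e1 : ΔS n m * (gP n m (Sum.inl i) * gF n m (Sum.inl r) - gZ n m (Sum.inr r) * gD n m (Sum.inr i))
      = ΔS n m * (gP n m (Sum.inl i) * gF n m (Sum.inl r)) - ΔS n m * (gZ n m (Sum.inr r) * gD n m (Sum.inr i)) := mul_sub (α := Module.End ℂ (SAlg n m)) _ _ _
  have e2 : (gP n m (Sum.inl i) * gF n m (Sum.inl r) - gZ n m (Sum.inr r) * gD n m (Sum.inr i)) * ΔS n m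
      = (gP n m (Sum.inl i) * gF n m (Sum.inl r)) * ΔS n m - (gZ n m (Sum.inr r) * gD n m (Sum.inr i)) * ΔS n m := sub_mul (α := Module.End ℂ (SAlg n m)) _ _ _
  rw [← Module.End.mul_eq_comp, ← Module.End.mul_eq_comp, hE, e1, e2, hX, hY,
    relD n m (Sum.inr i) (Sum.inl r)]
  abel

lemma part3 (r : Fin m) (i : Fin n) :
    Enri n m r i ∘ₗ ΔS n m = ΔS n m ∘ₗ Enri n m r i := by
  have hE : Enri n m r i
      = gZ n m (Sum.inl r) * gD n m (Sum.inl i) + gP n m (Sum.inr i) * gF n m (Sum.inr r) := rfl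
  have hX : ΔS n m * (gZ n m (Sum.inl r) * gD n m (Sum.inl i))
      = (gZ n m (Sum.inl r) * gD n m (Sum.inl i)) * ΔS n m
        + -(gF n m (Sum.inr r) * gD n m (Sum.inl i)) := by
    have h := delta_mul n m (gZ n m (Sum.inl r) * gD n m (Sum.inl i))
      (fun _ => 0)
      (fun t => -((if (Sum.inl t : Fin m ⊕ Fin m) = Sum.inl r then (1 : Module.End ℂ (SAlg n m)) else 0)
        * (gF n m (Sum.inr t) * gD n m (Sum.inl i))))
      (fun k => by
        beta_reduce
        exact (key0 (R := Module.End ℂ (SAlg n m)) (relB n m _ _) (relB n m _ _)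
          (hp_of_comm (relC n m _ _) (relC n m _ _))).trans (add_zero _).symm)
      (fun t => by
        beta_reduce
        exact (key3 (R := Module.End ℂ (SAlg n m)) (relF n m _ _)
          (relF0 n m (Sum.inr t) (Sum.inl r) (by simp))
          (hp_of_comm ((relD n m _ _).symm) ((relD n m _ _).symm))).trans
          (sub_eq_add_neg _ _))
    simp only [Sum.inl.injEq, Sum.inr.injEq, ite_mul, one_mul, zero_mul,
      Finset.sum_const_zero, add_zero, zero_add] at h
    have hsum : (∑ x : Fin m, -if x = r then gF n m (Sum.inr x) * gD n m (Sum.inl i) else 0)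
        = -(∑ x : Fin m, if x = r then gF n m (Sum.inr x) * gD n m (Sum.inl i) else 0) := by
      exact Finset.sum_neg_distrib (G := Module.End ℂ (SAlg n m)) _
    rw [hsum] at h
    simpa using h
  have hY : ΔS n m * (gP n m (Sum.inr i) * gF n m (Sum.inr r))
      = (gP n m (Sum.inr i) * gF n m (Sum.inr r)) * ΔS n m
        + gD n m (Sum.inl i) * gF n m (Sum.inr r) := by
    have h := delta_mul n m (gP n m (Sum.inr i) * gF n m (Sum.inr r))
      (fun k => (if (Sum.inr k : Fin n ⊕ Fin n) = Sum.inr i then (1 : Module.End ℂ (SAlg n m)) else 0)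
        * (gD n m (Sum.inl k) * gF n m (Sum.inr r)))
      (fun _ => 0)
      (fun k => by
        beta_reduce
        exact key2 (R := Module.End ℂ (SAlg n m))
          (relA0 n m (Sum.inl k) (Sum.inr i) (by simp)) (relA n m _ _)
          (central_ite (R := Module.End ℂ (SAlg n m)) _ _) (hp_of_comm (relD n m _ _) (relD n m _ _)))
      (fun t => by
        beta_reduce
        exact (key0 (R := Module.End ℂ (SAlg n m)) (relE n m _ _) (relE n m _ _)
          (hp_of_anti (relG n m _ _) (relG n m _ _))).trans (add_zero _).symm)
    simpa [Finset.sum_neg_distrib] using h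
  have e1 : ΔS n m * (gZ n m (Sum.inl r) * gD n m (Sum.inl i) + gP n m (Sum.inr i) * gF n m (Sum.inr r))
      = ΔS n m * (gZ n m (Sum.inl r) * gD n m (Sum.inl i)) + ΔS n m * (gP n m (Sum.inr i) * gF n m (Sum.inr r)) := by exact mul_add _ _ _
  have e2 : (gZ n m (Sum.inl r) * gD n m (Sum.inl i) + gP n m (Sum.inr i) * gF n m (Sum.inr r)) * ΔS n m
      = (gZ n m (Sum.inl r) * gD n m (Sum.inl i)) * ΔS n m + (gP n m (Sum.inr i) * gF n m (Sum.inr r)) * ΔS n m := by exact add_mul _ _ _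
  rw [← Module.End.mul_eq_comp, ← Module.End.mul_eq_comp, hE, e1, e2, hX, hY,
    relD n m (Sum.inl i) (Sum.inr r)]
  abel

lemma part4 (r : Fin m) (s : Fin m) :
    Enrs n m r s ∘ₗ ΔS n m = ΔS n m ∘ₗ Enrs n m r s := by
  have hE : Enrs n m r s
      = gZ n m (Sum.inl r) * gF n m (Sum.inl s) - gZ n m (Sum.inr s) * gF n m (Sum.inr r) := rfl
  have hX : ΔS n m * (gZ n m (Sum.inl r) * gF n m (Sum.inl s))
      = (gZ n m (Sum.inl r) * gF n m (Sum.inl s)) * ΔS n m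
        + -(gF n m (Sum.inr r) * gF n m (Sum.inl s)) := by
    have h := delta_mul n m (gZ n m (Sum.inl r) * gF n m (Sum.inl s))
      (fun _ => 0)
      (fun t => -((if (Sum.inl t : Fin m ⊕ Fin m) = Sum.inl r then (1 : Module.End ℂ (SAlg n m)) else 0)
        * (gF n m (Sum.inr t) * gF n m (Sum.inl s))))
      (fun k => by
        beta_reduce
        exact (key0 (R := Module.End ℂ (SAlg n m)) (relB n m _ _) (relB n m _ _)
          (hp_of_comm (relD n m _ _) (relD n m _ _))).trans (add_zero _).symm)
      (fun t => by
        beta_reduce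
        exact (key3 (R := Module.End ℂ (SAlg n m)) (relF n m _ _)
          (relF0 n m (Sum.inr t) (Sum.inl r) (by simp))
          (hp_of_anti (relG n m _ _) (relG n m _ _))).trans (sub_eq_add_neg _ _))
    simp only [Sum.inl.injEq, Sum.inr.injEq, ite_mul, one_mul, zero_mul,
      Finset.sum_const_zero, add_zero, zero_add] at h
    have hsum : (∑ x : Fin m, -if x = r then gF n m (Sum.inr x) * gF n m (Sum.inl s) else 0)
        = -(∑ x : Fin m, if x = r then gF n m (Sum.inr x) * gF n m (Sum.inl s) else 0) := by
      exact Finset.sum_neg_distrib (G := Module.End ℂ (SAlg n m)) _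
    rw [hsum] at h
    simpa using h
  have hY : ΔS n m * (gZ n m (Sum.inr s) * gF n m (Sum.inr r))
      = (gZ n m (Sum.inr s) * gF n m (Sum.inr r)) * ΔS n m
        + gF n m (Sum.inl s) * gF n m (Sum.inr r) := by
    have h := delta_mul n m (gZ n m (Sum.inr s) * gF n m (Sum.inr r))
      (fun _ => 0)
      (fun t => (if (Sum.inr t : Fin m ⊕ Fin m) = Sum.inr s then (1 : Module.End ℂ (SAlg n m)) else 0)
        * (gF n m (Sum.inl t) * gF n m (Sum.inr r)))
      (fun k => by
        beta_reduce
        exact (key0 (R := Module.End ℂ (SAlg n m)) (relB n m _ _) (relB n m _ _)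
          (hp_of_comm (relD n m _ _) (relD n m _ _))).trans (add_zero _).symm)
      (fun t => by
        beta_reduce
        exact key4 (R := Module.End ℂ (SAlg n m))
          (relF0 n m (Sum.inl t) (Sum.inr s) (by simp)) (relF n m _ _)
          (central_ite (R := Module.End ℂ (SAlg n m)) _ _) (hp_of_anti (relG n m _ _) (relG n m _ _)))
    simpa [Finset.sum_neg_distrib] using h
  have e1 : ΔS n m * (gZ n m (Sum.inl r) * gF n m (Sum.inl s) - gZ n m (Sum.inr s) * gF n m (Sum.inr r))
      = ΔS n m * (gZ n m (Sum.inl r) * gF n m (Sum.inl s)) - ΔS n m * (gZ n m (Sum.inr s) * gF n m (Sum.inr r)) := mul_sub (α := Module.End ℂ (SAlg n m)) _ _ _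
  have e2 : (gZ n m (Sum.inl r) * gF n m (Sum.inl s) - gZ n m (Sum.inr s) * gF n m (Sum.inr r)) * ΔS n m
      = (gZ n m (Sum.inl r) * gF n m (Sum.inl s)) * ΔS n m - (gZ n m (Sum.inr s) * gF n m (Sum.inr r)) * ΔS n m := sub_mul (α := Module.End ℂ (SAlg n m)) _ _ _
  rw [← Module.End.mul_eq_comp, ← Module.End.mul_eq_comp, hE, e1, e2, hX, hY,
    relG n m (Sum.inl s) (Sum.inr r)]
  abel

theorem gl_commutes_with_laplacian :
    (∀ i j : Fin n, Eij n m i j ∘ₗ ΔS n m = ΔS n m ∘ₗ Eij n m i j)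
    ∧ (∀ (i : Fin n) (r : Fin m), Einr n m i r ∘ₗ ΔS n m = ΔS n m ∘ₗ Einr n m i r)
    ∧ (∀ (r : Fin m) (i : Fin n), Enri n m r i ∘ₗ ΔS n m = ΔS n m ∘ₗ Enri n m r i)
    ∧ (∀ r s : Fin m, Enrs n m r s ∘ₗ ΔS n m = ΔS n m ∘ₗ Enrs n m r s) :=
  ⟨fun i j => part1 n m i j, fun i r => part2 n m i r,
    fun r i => part3 n m r i, fun r s => part4 n m r s⟩
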